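/- Let I ⊆ ℝ be an interval and A : I → gl(ℝ⁶) a differentiable curve with A(t) ∈ 𝔰𝔭(ℝ⁶) for all t, solving the bracket flow A′(t) = −(½ tr(S_{A(t)}²) + ¼ (tr(J A(t)))²)·A(t) + ½[A(t), [A(t), A(t)ᵗ]] + ½[A(t), S_{A(t)} ∘₆ S_{A(t)}]. Then t ↦ |A(t)|² is nonincreasing on I; in particular |A(t)| ≤ |A(t₀)| for all t₀ ≤ t in I, so the solution stays bounded (and hence cannot blow up in finite forward time). Moreover, if at some t ∈ I the derivative d/dt |A(t)|² vanishes, then A(t)ᵗ = −A(t) and tr(J A(t)) = 0. -/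

import Mathlib

open Matrix BigOperators

noncomputable section

abbrev M6 : Type := Matrix (Fin 6) (Fin 6) ℝ
abbrev M7 : Type := Matrix (Fin 7) (Fin 7) ℝ

/-- The canonical almost complex structure `J` on `ℝ⁶`:
`Je₁ = e₂, Je₂ = −e₁, Je₃ = e₄, Je₄ = −e₃, Je₅ = e₆, Je₆ = −e₅` (0-based indices). -/
def J6 : M6 := Matrix.of fun i j =>
  if (i = 1 ∧ j = 0) ∨ (i = 3 ∧ j = 2) ∨ (i = 5 ∧ j = 4) then 1
  else if (i = 0 ∧ j = 1) ∨ (i = 2 ∧ j = 3) ∨ (i = 4 ∧ j = 5) then -1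
  else 0

/-- `A ∈ 𝔰𝔭(ℝ⁶)` iff `AJ + JAᵗ = 0`. -/
def inSp (A : M6) : Prop := A * J6 + J6 * Aᵀ = 0

/-- The symmetric part `S_A = ½(A + Aᵗ)`. -/
def symPart (A : M6) : M6 := (1/2 : ℝ) • (A + Aᵀ)

/-- Frobenius inner product `⟨X,Y⟩ = tr(XYᵗ)`. -/
def mdot {n : ℕ} (X Y : Matrix (Fin n) (Fin n) ℝ) : ℝ := (X * Yᵀ).trace

/-- Commutator `[X,Y] = XY − YX`. -/
def mcomm {n : ℕ} (X Y : Matrix (Fin n) (Fin n) ℝ) : Matrix (Fin n) (Fin n) ℝ := X * Y - Y * X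

/-- Kronecker delta. -/
def kdelta {n : ℕ} (x y : Fin n) : ℝ := if x = y then 1 else 0

/-- The totally antisymmetric 3-tensor `e^a ∧ e^b ∧ e^c` evaluated on `(e_i, e_j, e_k)`. -/
def alt3 {n : ℕ} (a b c i j k : Fin n) : ℝ :=
  Matrix.det !![kdelta a i, kdelta a j, kdelta a k;
                kdelta b i, kdelta b j, kdelta b k;
                kdelta c i, kdelta c j, kdelta c k]

/-- `ρ⁺ = e¹³⁵ − e¹⁴⁶ − e²⁴⁵ − e²³⁶` (here written with 0-based indices). -/
def rhoP (i j k : Fin 6) : ℝ :=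
  alt3 0 2 4 i j k - alt3 0 3 5 i j k - alt3 1 3 4 i j k - alt3 1 2 5 i j k

/-- `(h ∘₆ k)_{ab} = Σ_{m,n,p,q} h_{mn} k_{pq} ρ⁺_{mpa} ρ⁺_{nqb}`. -/
def circ6 (h k : M6) : M6 :=
  Matrix.of fun a b => ∑ m, ∑ n, ∑ p, ∑ q, h m n * k p q * rhoP m p a * rhoP n q b

/-- The bracket-flow vector field of the Laplacian coflow. -/
def Fflow (A : M6) : M6 :=
  (-((1/2 : ℝ) * (symPart A * symPart A).trace + (1/4 : ℝ) * ((J6 * A).trace)^2)) • A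
  + (1/2 : ℝ) • mcomm A (mcomm A Aᵀ)
  + (1/2 : ℝ) • mcomm A (circ6 (symPart A) (symPart A))

-- ===================== auxiliary machinery =====================

lemma entry_eq {X Y : M6} (h : X = Y) (i j : Fin 6) : X i j = Y i j := by rw [h]

lemma mdot_eq {n : ℕ} (X Y : Matrix (Fin n) (Fin n) ℝ) :
    mdot X Y = ∑ i, ∑ j, X i j * Y i j := by
  simp [mdot, Matrix.trace, Matrix.diag, Matrix.mul_apply, Matrix.transpose_apply]

lemma mdot_comm {n : ℕ} (X Y : Matrix (Fin n) (Fin n) ℝ) : mdot X Y = mdot Y X := by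
  simp only [mdot_eq]; congr 1; ext i; congr 1; ext j; ring

lemma mdot_nonneg {n : ℕ} (X : Matrix (Fin n) (Fin n) ℝ) : 0 ≤ mdot X X := by
  rw [mdot_eq]
  exact Finset.sum_nonneg fun i _ => Finset.sum_nonneg fun j _ => mul_self_nonneg _

lemma mdot_self_eq_zero {n : ℕ} {X : Matrix (Fin n) (Fin n) ℝ} (h : mdot X X = 0) : X = 0 := by
  rw [mdot_eq] at h
  ext i j
  have h1 : ∀ i ∈ Finset.univ, (0:ℝ) ≤ ∑ j, X i j * X i j :=
    fun i _ => Finset.sum_nonneg fun j _ => mul_self_nonneg _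
  have h2 := (Finset.sum_eq_zero_iff_of_nonneg h1).mp h i (Finset.mem_univ i)
  have h3 : ∀ j ∈ Finset.univ, (0:ℝ) ≤ X i j * X i j := fun j _ => mul_self_nonneg _
  have h4 := (Finset.sum_eq_zero_iff_of_nonneg h3).mp h2 j (Finset.mem_univ j)
  have := mul_self_eq_zero.mp h4
  simpa using this

lemma mdot_add_left (X Y Z : M6) : mdot (X + Y) Z = mdot X Z + mdot Y Z := by
  simp only [mdot, Matrix.add_mul, Matrix.trace_add]

lemma mdot_smul_left (c : ℝ) (X Z : M6) : mdot (c • X) Z = c * mdot X Z := by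
  simp only [mdot, Matrix.smul_mul, Matrix.trace_smul, smul_eq_mul]

lemma J6_mul_J6 : J6 * J6 = -1 := by
  ext i j
  fin_cases i <;> fin_cases j <;>
    simp [J6, Matrix.mul_apply, Fin.sum_univ_six, Matrix.neg_apply, Matrix.one_apply]

-- trace identity: ⟨[A,X],A⟩ = −⟨X,[A,Aᵀ]⟩
lemma mdot_comm_bracket (A X : M6) : mdot (mcomm A X) A = -(mdot X (mcomm A Aᵀ)) := by
  have hC : (mcomm A Aᵀ)ᵀ = mcomm A Aᵀ := by
    simp [mcomm, Matrix.transpose_sub, Matrix.transpose_mul]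
  have e1 : mdot X (mcomm A Aᵀ) = ((X * (A * Aᵀ)).trace - (X * (Aᵀ * A)).trace) := by
    rw [mdot, hC]
    simp only [mcomm, Matrix.mul_sub, Matrix.trace_sub]
  rw [mdot, e1]
  simp only [mcomm, Matrix.sub_mul, Matrix.trace_sub]
  have t1 : (A * X * Aᵀ).trace = (X * (Aᵀ * A)).trace := by
    rw [Matrix.trace_mul_comm (A * X) Aᵀ, ← Matrix.mul_assoc, Matrix.trace_mul_comm]
  have t2 : (X * A * Aᵀ).trace = (X * (A * Aᵀ)).trace := by rw [Matrix.mul_assoc]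
  rw [t1, t2]; ring

lemma symPart_transpose (A : M6) : (symPart A)ᵀ = symPart A := by
  simp [symPart, Matrix.transpose_smul, Matrix.transpose_add]
  rw [add_comm]

lemma sp_transpose_eq (A : M6) (h : inSp A) : Aᵀ = J6 * A * J6 := by
  have c1 : J6 * Aᵀ = -(A * J6) := eq_neg_of_add_eq_zero_right h
  have : J6 * (J6 * Aᵀ) = J6 * -(A * J6) := by rw [c1]
  rw [← Matrix.mul_assoc, J6_mul_J6] at this
  simp only [Matrix.neg_mul, Matrix.one_mul, Matrix.mul_neg] at this
  have := neg_injective this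
  rw [this, Matrix.mul_assoc]

lemma sp_symPart_conj (A : M6) (h : inSp A) : symPart A = J6 * symPart A * J6 := by
  have hAT := sp_transpose_eq A h
  have hA : J6 * Aᵀ * J6 = A := by
    rw [hAT]
    calc J6 * (J6 * A * J6) * J6 = (J6 * J6) * A * (J6 * J6) := by
          simp only [Matrix.mul_assoc]
      _ = A := by rw [J6_mul_J6]; simp
  calc symPart A = (1/2 : ℝ) • (A + Aᵀ) := rfl
    _ = (1/2 : ℝ) • (J6 * Aᵀ * J6 + J6 * A * J6) := by rw [hA, ← hAT]
    _ = J6 * symPart A * J6 := by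
        simp only [symPart, Matrix.smul_mul, Matrix.mul_smul, Matrix.mul_add, Matrix.add_mul]
        rw [add_comm]
lemma alt3_eq {n : ℕ} (a b c i j k : Fin n) : alt3 a b c i j k =
    kdelta a i * kdelta b j * kdelta c k - kdelta a i * kdelta c j * kdelta b k
    - kdelta b i * kdelta a j * kdelta c k + kdelta b i * kdelta c j * kdelta a k
    + kdelta c i * kdelta a j * kdelta b k - kdelta c i * kdelta b j * kdelta a k := by
  simp [alt3, Matrix.det_fin_three, Matrix.vecHead, Matrix.vecTail]
  ring
lemma kd_0_0 : kdelta (0:Fin 6) 0 = 1 := by simp [kdelta]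
lemma kd_0_1 : kdelta (0:Fin 6) 1 = 0 := by simp [kdelta]
lemma kd_0_2 : kdelta (0:Fin 6) 2 = 0 := by simp [kdelta]
lemma kd_0_3 : kdelta (0:Fin 6) 3 = 0 := by simp [kdelta]
lemma kd_0_4 : kdelta (0:Fin 6) 4 = 0 := by simp [kdelta]
lemma kd_0_5 : kdelta (0:Fin 6) 5 = 0 := by simp [kdelta]
lemma kd_1_0 : kdelta (1:Fin 6) 0 = 0 := by simp [kdelta]
lemma kd_1_1 : kdelta (1:Fin 6) 1 = 1 := by simp [kdelta]
lemma kd_1_2 : kdelta (1:Fin 6) 2 = 0 := by simp [kdelta]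
lemma kd_1_3 : kdelta (1:Fin 6) 3 = 0 := by simp [kdelta]
lemma kd_1_4 : kdelta (1:Fin 6) 4 = 0 := by simp [kdelta]
lemma kd_1_5 : kdelta (1:Fin 6) 5 = 0 := by simp [kdelta]
lemma kd_2_0 : kdelta (2:Fin 6) 0 = 0 := by simp [kdelta]
lemma kd_2_1 : kdelta (2:Fin 6) 1 = 0 := by simp [kdelta]
lemma kd_2_2 : kdelta (2:Fin 6) 2 = 1 := by simp [kdelta]
lemma kd_2_3 : kdelta (2:Fin 6) 3 = 0 := by simp [kdelta]
lemma kd_2_4 : kdelta (2:Fin 6) 4 = 0 := by simp [kdelta]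
lemma kd_2_5 : kdelta (2:Fin 6) 5 = 0 := by simp [kdelta]
lemma kd_3_0 : kdelta (3:Fin 6) 0 = 0 := by simp [kdelta]
lemma kd_3_1 : kdelta (3:Fin 6) 1 = 0 := by simp [kdelta]
lemma kd_3_2 : kdelta (3:Fin 6) 2 = 0 := by simp [kdelta]
lemma kd_3_3 : kdelta (3:Fin 6) 3 = 1 := by simp [kdelta]
lemma kd_3_4 : kdelta (3:Fin 6) 4 = 0 := by simp [kdelta]
lemma kd_3_5 : kdelta (3:Fin 6) 5 = 0 := by simp [kdelta]
lemma kd_4_0 : kdelta (4:Fin 6) 0 = 0 := by simp [kdelta]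
lemma kd_4_1 : kdelta (4:Fin 6) 1 = 0 := by simp [kdelta]
lemma kd_4_2 : kdelta (4:Fin 6) 2 = 0 := by simp [kdelta]
lemma kd_4_3 : kdelta (4:Fin 6) 3 = 0 := by simp [kdelta]
lemma kd_4_4 : kdelta (4:Fin 6) 4 = 1 := by simp [kdelta]
lemma kd_4_5 : kdelta (4:Fin 6) 5 = 0 := by simp [kdelta]
lemma kd_5_0 : kdelta (5:Fin 6) 0 = 0 := by simp [kdelta]
lemma kd_5_1 : kdelta (5:Fin 6) 1 = 0 := by simp [kdelta]
lemma kd_5_2 : kdelta (5:Fin 6) 2 = 0 := by simp [kdelta]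
lemma kd_5_3 : kdelta (5:Fin 6) 3 = 0 := by simp [kdelta]
lemma kd_5_4 : kdelta (5:Fin 6) 4 = 0 := by simp [kdelta]
lemma kd_5_5 : kdelta (5:Fin 6) 5 = 1 := by simp [kdelta]
lemma rsumL_0 (f : Fin 6 → Fin 6 → ℝ) : (∑ m, ∑ p, rhoP m p 0 * f m p) = f 2 4 - f 3 5 - f 4 2 + f 5 3 := by
  simp only [Fin.sum_univ_six, rhoP, alt3_eq, kd_0_0, kd_0_1, kd_0_2, kd_0_3, kd_0_4, kd_0_5, kd_1_0, kd_1_1, kd_1_2, kd_1_3, kd_1_4, kd_1_5, kd_2_0, kd_2_1, kd_2_2, kd_2_3, kd_2_4, kd_2_5, kd_3_0, kd_3_1, kd_3_2, kd_3_3, kd_3_4, kd_3_5, kd_4_0, kd_4_1, kd_4_2, kd_4_3, kd_4_4, kd_4_5, kd_5_0, kd_5_1, kd_5_2, kd_5_3, kd_5_4, kd_5_5, mul_one, mul_zero, zero_mul,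
    one_mul, sub_zero, zero_sub, add_zero, zero_add, neg_zero, neg_neg, sub_self]
  ring
lemma rsumR_0 (f : Fin 6 → Fin 6 → ℝ) : (∑ n, ∑ q, f n q * rhoP n q 0) = f 2 4 - f 3 5 - f 4 2 + f 5 3 := by
  simp only [Fin.sum_univ_six, rhoP, alt3_eq, kd_0_0, kd_0_1, kd_0_2, kd_0_3, kd_0_4, kd_0_5, kd_1_0, kd_1_1, kd_1_2, kd_1_3, kd_1_4, kd_1_5, kd_2_0, kd_2_1, kd_2_2, kd_2_3, kd_2_4, kd_2_5, kd_3_0, kd_3_1, kd_3_2, kd_3_3, kd_3_4, kd_3_5, kd_4_0, kd_4_1, kd_4_2, kd_4_3, kd_4_4, kd_4_5, kd_5_0, kd_5_1, kd_5_2, kd_5_3, kd_5_4, kd_5_5, mul_one, mul_zero, zero_mul,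
    one_mul, sub_zero, zero_sub, add_zero, zero_add, neg_zero, neg_neg, sub_self]
  ring
lemma rsumL_1 (f : Fin 6 → Fin 6 → ℝ) : (∑ m, ∑ p, rhoP m p 1 * f m p) = -f 2 5 - f 3 4 + f 4 3 + f 5 2 := by
  simp only [Fin.sum_univ_six, rhoP, alt3_eq, kd_0_0, kd_0_1, kd_0_2, kd_0_3, kd_0_4, kd_0_5, kd_1_0, kd_1_1, kd_1_2, kd_1_3, kd_1_4, kd_1_5, kd_2_0, kd_2_1, kd_2_2, kd_2_3, kd_2_4, kd_2_5, kd_3_0, kd_3_1, kd_3_2, kd_3_3, kd_3_4, kd_3_5, kd_4_0, kd_4_1, kd_4_2, kd_4_3, kd_4_4, kd_4_5, kd_5_0, kd_5_1, kd_5_2, kd_5_3, kd_5_4, kd_5_5, mul_one, mul_zero, zero_mul,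
    one_mul, sub_zero, zero_sub, add_zero, zero_add, neg_zero, neg_neg, sub_self]
  ring
lemma rsumR_1 (f : Fin 6 → Fin 6 → ℝ) : (∑ n, ∑ q, f n q * rhoP n q 1) = -f 2 5 - f 3 4 + f 4 3 + f 5 2 := by
  simp only [Fin.sum_univ_six, rhoP, alt3_eq, kd_0_0, kd_0_1, kd_0_2, kd_0_3, kd_0_4, kd_0_5, kd_1_0, kd_1_1, kd_1_2, kd_1_3, kd_1_4, kd_1_5, kd_2_0, kd_2_1, kd_2_2, kd_2_3, kd_2_4, kd_2_5, kd_3_0, kd_3_1, kd_3_2, kd_3_3, kd_3_4, kd_3_5, kd_4_0, kd_4_1, kd_4_2, kd_4_3, kd_4_4, kd_4_5, kd_5_0, kd_5_1, kd_5_2, kd_5_3, kd_5_4, kd_5_5, mul_one, mul_zero, zero_mul,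
    one_mul, sub_zero, zero_sub, add_zero, zero_add, neg_zero, neg_neg, sub_self]
  ring
lemma rsumL_2 (f : Fin 6 → Fin 6 → ℝ) : (∑ m, ∑ p, rhoP m p 2 * f m p) = -f 0 4 + f 1 5 + f 4 0 - f 5 1 := by
  simp only [Fin.sum_univ_six, rhoP, alt3_eq, kd_0_0, kd_0_1, kd_0_2, kd_0_3, kd_0_4, kd_0_5, kd_1_0, kd_1_1, kd_1_2, kd_1_3, kd_1_4, kd_1_5, kd_2_0, kd_2_1, kd_2_2, kd_2_3, kd_2_4, kd_2_5, kd_3_0, kd_3_1, kd_3_2, kd_3_3, kd_3_4, kd_3_5, kd_4_0, kd_4_1, kd_4_2, kd_4_3, kd_4_4, kd_4_5, kd_5_0, kd_5_1, kd_5_2, kd_5_3, kd_5_4, kd_5_5, mul_one, mul_zero, zero_mul,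
    one_mul, sub_zero, zero_sub, add_zero, zero_add, neg_zero, neg_neg, sub_self]
  ring
lemma rsumR_2 (f : Fin 6 → Fin 6 → ℝ) : (∑ n, ∑ q, f n q * rhoP n q 2) = -f 0 4 + f 1 5 + f 4 0 - f 5 1 := by
  simp only [Fin.sum_univ_six, rhoP, alt3_eq, kd_0_0, kd_0_1, kd_0_2, kd_0_3, kd_0_4, kd_0_5, kd_1_0, kd_1_1, kd_1_2, kd_1_3, kd_1_4, kd_1_5, kd_2_0, kd_2_1, kd_2_2, kd_2_3, kd_2_4, kd_2_5, kd_3_0, kd_3_1, kd_3_2, kd_3_3, kd_3_4, kd_3_5, kd_4_0, kd_4_1, kd_4_2, kd_4_3, kd_4_4, kd_4_5, kd_5_0, kd_5_1, kd_5_2, kd_5_3, kd_5_4, kd_5_5, mul_one, mul_zero, zero_mul,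
    one_mul, sub_zero, zero_sub, add_zero, zero_add, neg_zero, neg_neg, sub_self]
  ring
lemma rsumL_3 (f : Fin 6 → Fin 6 → ℝ) : (∑ m, ∑ p, rhoP m p 3 * f m p) = f 0 5 + f 1 4 - f 4 1 - f 5 0 := by
  simp only [Fin.sum_univ_six, rhoP, alt3_eq, kd_0_0, kd_0_1, kd_0_2, kd_0_3, kd_0_4, kd_0_5, kd_1_0, kd_1_1, kd_1_2, kd_1_3, kd_1_4, kd_1_5, kd_2_0, kd_2_1, kd_2_2, kd_2_3, kd_2_4, kd_2_5, kd_3_0, kd_3_1, kd_3_2, kd_3_3, kd_3_4, kd_3_5, kd_4_0, kd_4_1, kd_4_2, kd_4_3, kd_4_4, kd_4_5, kd_5_0, kd_5_1, kd_5_2, kd_5_3, kd_5_4, kd_5_5, mul_one, mul_zero, zero_mul,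
    one_mul, sub_zero, zero_sub, add_zero, zero_add, neg_zero, neg_neg, sub_self]
  ring
lemma rsumR_3 (f : Fin 6 → Fin 6 → ℝ) : (∑ n, ∑ q, f n q * rhoP n q 3) = f 0 5 + f 1 4 - f 4 1 - f 5 0 := by
  simp only [Fin.sum_univ_six, rhoP, alt3_eq, kd_0_0, kd_0_1, kd_0_2, kd_0_3, kd_0_4, kd_0_5, kd_1_0, kd_1_1, kd_1_2, kd_1_3, kd_1_4, kd_1_5, kd_2_0, kd_2_1, kd_2_2, kd_2_3, kd_2_4, kd_2_5, kd_3_0, kd_3_1, kd_3_2, kd_3_3, kd_3_4, kd_3_5, kd_4_0, kd_4_1, kd_4_2, kd_4_3, kd_4_4, kd_4_5, kd_5_0, kd_5_1, kd_5_2, kd_5_3, kd_5_4, kd_5_5, mul_one, mul_zero, zero_mul,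
    one_mul, sub_zero, zero_sub, add_zero, zero_add, neg_zero, neg_neg, sub_self]
  ring
lemma rsumL_4 (f : Fin 6 → Fin 6 → ℝ) : (∑ m, ∑ p, rhoP m p 4 * f m p) = f 0 2 - f 1 3 - f 2 0 + f 3 1 := by
  simp only [Fin.sum_univ_six, rhoP, alt3_eq, kd_0_0, kd_0_1, kd_0_2, kd_0_3, kd_0_4, kd_0_5, kd_1_0, kd_1_1, kd_1_2, kd_1_3, kd_1_4, kd_1_5, kd_2_0, kd_2_1, kd_2_2, kd_2_3, kd_2_4, kd_2_5, kd_3_0, kd_3_1, kd_3_2, kd_3_3, kd_3_4, kd_3_5, kd_4_0, kd_4_1, kd_4_2, kd_4_3, kd_4_4, kd_4_5, kd_5_0, kd_5_1, kd_5_2, kd_5_3, kd_5_4, kd_5_5, mul_one, mul_zero, zero_mul,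
    one_mul, sub_zero, zero_sub, add_zero, zero_add, neg_zero, neg_neg, sub_self]
  ring
lemma rsumR_4 (f : Fin 6 → Fin 6 → ℝ) : (∑ n, ∑ q, f n q * rhoP n q 4) = f 0 2 - f 1 3 - f 2 0 + f 3 1 := by
  simp only [Fin.sum_univ_six, rhoP, alt3_eq, kd_0_0, kd_0_1, kd_0_2, kd_0_3, kd_0_4, kd_0_5, kd_1_0, kd_1_1, kd_1_2, kd_1_3, kd_1_4, kd_1_5, kd_2_0, kd_2_1, kd_2_2, kd_2_3, kd_2_4, kd_2_5, kd_3_0, kd_3_1, kd_3_2, kd_3_3, kd_3_4, kd_3_5, kd_4_0, kd_4_1, kd_4_2, kd_4_3, kd_4_4, kd_4_5, kd_5_0, kd_5_1, kd_5_2, kd_5_3, kd_5_4, kd_5_5, mul_one, mul_zero, zero_mul,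
    one_mul, sub_zero, zero_sub, add_zero, zero_add, neg_zero, neg_neg, sub_self]
  ring
lemma rsumL_5 (f : Fin 6 → Fin 6 → ℝ) : (∑ m, ∑ p, rhoP m p 5 * f m p) = -f 0 3 - f 1 2 + f 2 1 + f 3 0 := by
  simp only [Fin.sum_univ_six, rhoP, alt3_eq, kd_0_0, kd_0_1, kd_0_2, kd_0_3, kd_0_4, kd_0_5, kd_1_0, kd_1_1, kd_1_2, kd_1_3, kd_1_4, kd_1_5, kd_2_0, kd_2_1, kd_2_2, kd_2_3, kd_2_4, kd_2_5, kd_3_0, kd_3_1, kd_3_2, kd_3_3, kd_3_4, kd_3_5, kd_4_0, kd_4_1, kd_4_2, kd_4_3, kd_4_4, kd_4_5, kd_5_0, kd_5_1, kd_5_2, kd_5_3, kd_5_4, kd_5_5, mul_one, mul_zero, zero_mul,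
    one_mul, sub_zero, zero_sub, add_zero, zero_add, neg_zero, neg_neg, sub_self]
  ring
lemma rsumR_5 (f : Fin 6 → Fin 6 → ℝ) : (∑ n, ∑ q, f n q * rhoP n q 5) = -f 0 3 - f 1 2 + f 2 1 + f 3 0 := by
  simp only [Fin.sum_univ_six, rhoP, alt3_eq, kd_0_0, kd_0_1, kd_0_2, kd_0_3, kd_0_4, kd_0_5, kd_1_0, kd_1_1, kd_1_2, kd_1_3, kd_1_4, kd_1_5, kd_2_0, kd_2_1, kd_2_2, kd_2_3, kd_2_4, kd_2_5, kd_3_0, kd_3_1, kd_3_2, kd_3_3, kd_3_4, kd_3_5, kd_4_0, kd_4_1, kd_4_2, kd_4_3, kd_4_4, kd_4_5, kd_5_0, kd_5_1, kd_5_2, kd_5_3, kd_5_4, kd_5_5, mul_one, mul_zero, zero_mul,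
    one_mul, sub_zero, zero_sub, add_zero, zero_add, neg_zero, neg_neg, sub_self]
  ring

lemma circ6_apply (h k : M6) (a b : Fin 6) :
    circ6 h k a b = ∑ m, ∑ p, rhoP m p a * ∑ n, ∑ q, h m n * k p q * rhoP n q b := by
  simp only [circ6, Matrix.of_apply]
  refine Finset.sum_congr rfl fun m _ => ?_
  rw [Finset.sum_comm]
  refine Finset.sum_congr rfl fun p _ => ?_
  rw [Finset.mul_sum]
  refine Finset.sum_congr rfl fun n _ => ?_
  rw [Finset.mul_sum]
  refine Finset.sum_congr rfl fun q _ => ?_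
  ring

lemma J6v_0_0 : J6 (0:Fin 6) 0 = 0 := by simp [J6, Matrix.of_apply]
lemma J6v_0_1 : J6 (0:Fin 6) 1 = (-1) := by simp [J6, Matrix.of_apply]
lemma J6v_0_2 : J6 (0:Fin 6) 2 = 0 := by simp [J6, Matrix.of_apply]
lemma J6v_0_3 : J6 (0:Fin 6) 3 = 0 := by simp [J6, Matrix.of_apply]
lemma J6v_0_4 : J6 (0:Fin 6) 4 = 0 := by simp [J6, Matrix.of_apply]
lemma J6v_0_5 : J6 (0:Fin 6) 5 = 0 := by simp [J6, Matrix.of_apply]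
lemma J6v_1_0 : J6 (1:Fin 6) 0 = 1 := by simp [J6, Matrix.of_apply]
lemma J6v_1_1 : J6 (1:Fin 6) 1 = 0 := by simp [J6, Matrix.of_apply]
lemma J6v_1_2 : J6 (1:Fin 6) 2 = 0 := by simp [J6, Matrix.of_apply]
lemma J6v_1_3 : J6 (1:Fin 6) 3 = 0 := by simp [J6, Matrix.of_apply]
lemma J6v_1_4 : J6 (1:Fin 6) 4 = 0 := by simp [J6, Matrix.of_apply]
lemma J6v_1_5 : J6 (1:Fin 6) 5 = 0 := by simp [J6, Matrix.of_apply]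
lemma J6v_2_0 : J6 (2:Fin 6) 0 = 0 := by simp [J6, Matrix.of_apply]
lemma J6v_2_1 : J6 (2:Fin 6) 1 = 0 := by simp [J6, Matrix.of_apply]
lemma J6v_2_2 : J6 (2:Fin 6) 2 = 0 := by simp [J6, Matrix.of_apply]
lemma J6v_2_3 : J6 (2:Fin 6) 3 = (-1) := by simp [J6, Matrix.of_apply]
lemma J6v_2_4 : J6 (2:Fin 6) 4 = 0 := by simp [J6, Matrix.of_apply]
lemma J6v_2_5 : J6 (2:Fin 6) 5 = 0 := by simp [J6, Matrix.of_apply]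
lemma J6v_3_0 : J6 (3:Fin 6) 0 = 0 := by simp [J6, Matrix.of_apply]
lemma J6v_3_1 : J6 (3:Fin 6) 1 = 0 := by simp [J6, Matrix.of_apply]
lemma J6v_3_2 : J6 (3:Fin 6) 2 = 1 := by simp [J6, Matrix.of_apply]
lemma J6v_3_3 : J6 (3:Fin 6) 3 = 0 := by simp [J6, Matrix.of_apply]
lemma J6v_3_4 : J6 (3:Fin 6) 4 = 0 := by simp [J6, Matrix.of_apply]
lemma J6v_3_5 : J6 (3:Fin 6) 5 = 0 := by simp [J6, Matrix.of_apply]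
lemma J6v_4_0 : J6 (4:Fin 6) 0 = 0 := by simp [J6, Matrix.of_apply]
lemma J6v_4_1 : J6 (4:Fin 6) 1 = 0 := by simp [J6, Matrix.of_apply]
lemma J6v_4_2 : J6 (4:Fin 6) 2 = 0 := by simp [J6, Matrix.of_apply]
lemma J6v_4_3 : J6 (4:Fin 6) 3 = 0 := by simp [J6, Matrix.of_apply]
lemma J6v_4_4 : J6 (4:Fin 6) 4 = 0 := by simp [J6, Matrix.of_apply]
lemma J6v_4_5 : J6 (4:Fin 6) 5 = (-1) := by simp [J6, Matrix.of_apply]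
lemma J6v_5_0 : J6 (5:Fin 6) 0 = 0 := by simp [J6, Matrix.of_apply]
lemma J6v_5_1 : J6 (5:Fin 6) 1 = 0 := by simp [J6, Matrix.of_apply]
lemma J6v_5_2 : J6 (5:Fin 6) 2 = 0 := by simp [J6, Matrix.of_apply]
lemma J6v_5_3 : J6 (5:Fin 6) 3 = 0 := by simp [J6, Matrix.of_apply]
lemma J6v_5_4 : J6 (5:Fin 6) 4 = 1 := by simp [J6, Matrix.of_apply]
lemma J6v_5_5 : J6 (5:Fin 6) 5 = 0 := by simp [J6, Matrix.of_apply]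
set_option maxHeartbeats 4000000 in
lemma circ_norm (S : M6) (hsym : Sᵀ = S) (hconj : S = J6 * S * J6) :
    mdot (circ6 S S) (circ6 S S) = 4 * (mdot S S)^2 - 8 * mdot (S * S) (S * S) := by
  have sR_1_0 : S 1 0 = S 0 1 := by
    have h := entry_eq hsym 0 1; rwa [Matrix.transpose_apply] at h
  have sR_2_0 : S 2 0 = S 0 2 := by
    have h := entry_eq hsym 0 2; rwa [Matrix.transpose_apply] at h
  have sR_2_1 : S 2 1 = S 1 2 := by
    have h := entry_eq hsym 1 2; rwa [Matrix.transpose_apply] at h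
  have sR_3_0 : S 3 0 = S 0 3 := by
    have h := entry_eq hsym 0 3; rwa [Matrix.transpose_apply] at h
  have sR_3_1 : S 3 1 = S 1 3 := by
    have h := entry_eq hsym 1 3; rwa [Matrix.transpose_apply] at h
  have sR_3_2 : S 3 2 = S 2 3 := by
    have h := entry_eq hsym 2 3; rwa [Matrix.transpose_apply] at h
  have sR_4_0 : S 4 0 = S 0 4 := by
    have h := entry_eq hsym 0 4; rwa [Matrix.transpose_apply] at h
  have sR_4_1 : S 4 1 = S 1 4 := by
    have h := entry_eq hsym 1 4; rwa [Matrix.transpose_apply] at h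
  have sR_4_2 : S 4 2 = S 2 4 := by
    have h := entry_eq hsym 2 4; rwa [Matrix.transpose_apply] at h
  have sR_4_3 : S 4 3 = S 3 4 := by
    have h := entry_eq hsym 3 4; rwa [Matrix.transpose_apply] at h
  have sR_5_0 : S 5 0 = S 0 5 := by
    have h := entry_eq hsym 0 5; rwa [Matrix.transpose_apply] at h
  have sR_5_1 : S 5 1 = S 1 5 := by
    have h := entry_eq hsym 1 5; rwa [Matrix.transpose_apply] at h
  have sR_5_2 : S 5 2 = S 2 5 := by
    have h := entry_eq hsym 2 5; rwa [Matrix.transpose_apply] at h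
  have sR_5_3 : S 5 3 = S 3 5 := by
    have h := entry_eq hsym 3 5; rwa [Matrix.transpose_apply] at h
  have sR_5_4 : S 5 4 = S 4 5 := by
    have h := entry_eq hsym 4 5; rwa [Matrix.transpose_apply] at h
  have cC_1_1 : S 1 1 = -S 0 0 := by
    have h := entry_eq hconj 1 1
    simp [Matrix.mul_apply, Fin.sum_univ_six, J6v_0_0, J6v_0_1, J6v_0_2, J6v_0_3, J6v_0_4, J6v_0_5, J6v_1_0, J6v_1_1, J6v_1_2, J6v_1_3, J6v_1_4, J6v_1_5, J6v_2_0, J6v_2_1, J6v_2_2, J6v_2_3, J6v_2_4, J6v_2_5, J6v_3_0, J6v_3_1, J6v_3_2, J6v_3_3, J6v_3_4, J6v_3_5, J6v_4_0, J6v_4_1, J6v_4_2, J6v_4_3, J6v_4_4, J6v_4_5, J6v_5_0, J6v_5_1, J6v_5_2, J6v_5_3, J6v_5_4, J6v_5_5] at h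
    linarith [h]
  have cB_1_2 : S 1 2 = S 0 3 := by
    have h := entry_eq hconj 1 2
    simp [Matrix.mul_apply, Fin.sum_univ_six, J6v_0_0, J6v_0_1, J6v_0_2, J6v_0_3, J6v_0_4, J6v_0_5, J6v_1_0, J6v_1_1, J6v_1_2, J6v_1_3, J6v_1_4, J6v_1_5, J6v_2_0, J6v_2_1, J6v_2_2, J6v_2_3, J6v_2_4, J6v_2_5, J6v_3_0, J6v_3_1, J6v_3_2, J6v_3_3, J6v_3_4, J6v_3_5, J6v_4_0, J6v_4_1, J6v_4_2, J6v_4_3, J6v_4_4, J6v_4_5, J6v_5_0, J6v_5_1, J6v_5_2, J6v_5_3, J6v_5_4, J6v_5_5] at h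
    linarith [h]
  have cC_1_3 : S 1 3 = -S 0 2 := by
    have h := entry_eq hconj 1 3
    simp [Matrix.mul_apply, Fin.sum_univ_six, J6v_0_0, J6v_0_1, J6v_0_2, J6v_0_3, J6v_0_4, J6v_0_5, J6v_1_0, J6v_1_1, J6v_1_2, J6v_1_3, J6v_1_4, J6v_1_5, J6v_2_0, J6v_2_1, J6v_2_2, J6v_2_3, J6v_2_4, J6v_2_5, J6v_3_0, J6v_3_1, J6v_3_2, J6v_3_3, J6v_3_4, J6v_3_5, J6v_4_0, J6v_4_1, J6v_4_2, J6v_4_3, J6v_4_4, J6v_4_5, J6v_5_0, J6v_5_1, J6v_5_2, J6v_5_3, J6v_5_4, J6v_5_5] at h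
    linarith [h]
  have cB_1_4 : S 1 4 = S 0 5 := by
    have h := entry_eq hconj 1 4
    simp [Matrix.mul_apply, Fin.sum_univ_six, J6v_0_0, J6v_0_1, J6v_0_2, J6v_0_3, J6v_0_4, J6v_0_5, J6v_1_0, J6v_1_1, J6v_1_2, J6v_1_3, J6v_1_4, J6v_1_5, J6v_2_0, J6v_2_1, J6v_2_2, J6v_2_3, J6v_2_4, J6v_2_5, J6v_3_0, J6v_3_1, J6v_3_2, J6v_3_3, J6v_3_4, J6v_3_5, J6v_4_0, J6v_4_1, J6v_4_2, J6v_4_3, J6v_4_4, J6v_4_5, J6v_5_0, J6v_5_1, J6v_5_2, J6v_5_3, J6v_5_4, J6v_5_5] at h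
    linarith [h]
  have cC_1_5 : S 1 5 = -S 0 4 := by
    have h := entry_eq hconj 1 5
    simp [Matrix.mul_apply, Fin.sum_univ_six, J6v_0_0, J6v_0_1, J6v_0_2, J6v_0_3, J6v_0_4, J6v_0_5, J6v_1_0, J6v_1_1, J6v_1_2, J6v_1_3, J6v_1_4, J6v_1_5, J6v_2_0, J6v_2_1, J6v_2_2, J6v_2_3, J6v_2_4, J6v_2_5, J6v_3_0, J6v_3_1, J6v_3_2, J6v_3_3, J6v_3_4, J6v_3_5, J6v_4_0, J6v_4_1, J6v_4_2, J6v_4_3, J6v_4_4, J6v_4_5, J6v_5_0, J6v_5_1, J6v_5_2, J6v_5_3, J6v_5_4, J6v_5_5] at h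
    linarith [h]
  have cC_3_3 : S 3 3 = -S 2 2 := by
    have h := entry_eq hconj 3 3
    simp [Matrix.mul_apply, Fin.sum_univ_six, J6v_0_0, J6v_0_1, J6v_0_2, J6v_0_3, J6v_0_4, J6v_0_5, J6v_1_0, J6v_1_1, J6v_1_2, J6v_1_3, J6v_1_4, J6v_1_5, J6v_2_0, J6v_2_1, J6v_2_2, J6v_2_3, J6v_2_4, J6v_2_5, J6v_3_0, J6v_3_1, J6v_3_2, J6v_3_3, J6v_3_4, J6v_3_5, J6v_4_0, J6v_4_1, J6v_4_2, J6v_4_3, J6v_4_4, J6v_4_5, J6v_5_0, J6v_5_1, J6v_5_2, J6v_5_3, J6v_5_4, J6v_5_5] at h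
    linarith [h]
  have cB_3_4 : S 3 4 = S 2 5 := by
    have h := entry_eq hconj 3 4
    simp [Matrix.mul_apply, Fin.sum_univ_six, J6v_0_0, J6v_0_1, J6v_0_2, J6v_0_3, J6v_0_4, J6v_0_5, J6v_1_0, J6v_1_1, J6v_1_2, J6v_1_3, J6v_1_4, J6v_1_5, J6v_2_0, J6v_2_1, J6v_2_2, J6v_2_3, J6v_2_4, J6v_2_5, J6v_3_0, J6v_3_1, J6v_3_2, J6v_3_3, J6v_3_4, J6v_3_5, J6v_4_0, J6v_4_1, J6v_4_2, J6v_4_3, J6v_4_4, J6v_4_5, J6v_5_0, J6v_5_1, J6v_5_2, J6v_5_3, J6v_5_4, J6v_5_5] at h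
    linarith [h]
  have cC_3_5 : S 3 5 = -S 2 4 := by
    have h := entry_eq hconj 3 5
    simp [Matrix.mul_apply, Fin.sum_univ_six, J6v_0_0, J6v_0_1, J6v_0_2, J6v_0_3, J6v_0_4, J6v_0_5, J6v_1_0, J6v_1_1, J6v_1_2, J6v_1_3, J6v_1_4, J6v_1_5, J6v_2_0, J6v_2_1, J6v_2_2, J6v_2_3, J6v_2_4, J6v_2_5, J6v_3_0, J6v_3_1, J6v_3_2, J6v_3_3, J6v_3_4, J6v_3_5, J6v_4_0, J6v_4_1, J6v_4_2, J6v_4_3, J6v_4_4, J6v_4_5, J6v_5_0, J6v_5_1, J6v_5_2, J6v_5_3, J6v_5_4, J6v_5_5] at h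
    linarith [h]
  have cC_5_5 : S 5 5 = -S 4 4 := by
    have h := entry_eq hconj 5 5
    simp [Matrix.mul_apply, Fin.sum_univ_six, J6v_0_0, J6v_0_1, J6v_0_2, J6v_0_3, J6v_0_4, J6v_0_5, J6v_1_0, J6v_1_1, J6v_1_2, J6v_1_3, J6v_1_4, J6v_1_5, J6v_2_0, J6v_2_1, J6v_2_2, J6v_2_3, J6v_2_4, J6v_2_5, J6v_3_0, J6v_3_1, J6v_3_2, J6v_3_3, J6v_3_4, J6v_3_5, J6v_4_0, J6v_4_1, J6v_4_2, J6v_4_3, J6v_4_4, J6v_4_5, J6v_5_0, J6v_5_1, J6v_5_2, J6v_5_3, J6v_5_4, J6v_5_5] at h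
    linarith [h]
  have Q_0_0 : circ6 S S 0 0 = 4*S 2 5*S 2 5 - 4*S 2 4*S 2 4 - 4*S 2 3*S 4 5 + 4*S 2 2*S 4 4 := by
    rw [circ6_apply]
    simp only [rsumL_0]
    simp only [rsumR_0]
    simp only [sR_1_0, sR_2_0, sR_2_1, sR_3_0, sR_3_1, sR_3_2, sR_4_0, sR_4_1, sR_4_2, sR_4_3, sR_5_0, sR_5_1, sR_5_2, sR_5_3, sR_5_4, cC_1_1, cB_1_2, cC_1_3, cB_1_4, cC_1_5, cC_3_3, cB_3_4, cC_3_5, cC_5_5]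
    ring
  have Q_0_1 : circ6 S S 0 1 = 8*S 2 4*S 2 5 - 4*S 2 3*S 4 4 - 4*S 2 2*S 4 5 := by
    rw [circ6_apply]
    simp only [rsumL_0]
    simp only [rsumR_1]
    simp only [sR_1_0, sR_2_0, sR_2_1, sR_3_0, sR_3_1, sR_3_2, sR_4_0, sR_4_1, sR_4_2, sR_4_3, sR_5_0, sR_5_1, sR_5_2, sR_5_3, sR_5_4, cC_1_1, cB_1_2, cC_1_3, cB_1_4, cC_1_5, cC_3_3, cB_3_4, cC_3_5, cC_5_5]
    ring
  have Q_0_2 : circ6 S S 0 2 = -4*S 0 5*S 2 5 + 4*S 0 4*S 2 4 + 4*S 0 3*S 4 5 - 4*S 0 2*S 4 4 := by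
    rw [circ6_apply]
    simp only [rsumL_0]
    simp only [rsumR_2]
    simp only [sR_1_0, sR_2_0, sR_2_1, sR_3_0, sR_3_1, sR_3_2, sR_4_0, sR_4_1, sR_4_2, sR_4_3, sR_5_0, sR_5_1, sR_5_2, sR_5_3, sR_5_4, cC_1_1, cB_1_2, cC_1_3, cB_1_4, cC_1_5, cC_3_3, cB_3_4, cC_3_5, cC_5_5]
    ring
  have Q_0_3 : circ6 S S 0 3 = -4*S 0 5*S 2 4 - 4*S 0 4*S 2 5 + 4*S 0 3*S 4 4 + 4*S 0 2*S 4 5 := by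
    rw [circ6_apply]
    simp only [rsumL_0]
    simp only [rsumR_3]
    simp only [sR_1_0, sR_2_0, sR_2_1, sR_3_0, sR_3_1, sR_3_2, sR_4_0, sR_4_1, sR_4_2, sR_4_3, sR_5_0, sR_5_1, sR_5_2, sR_5_3, sR_5_4, cC_1_1, cB_1_2, cC_1_3, cB_1_4, cC_1_5, cC_3_3, cB_3_4, cC_3_5, cC_5_5]
    ring
  have Q_0_4 : circ6 S S 0 4 = 4*S 0 5*S 2 3 - 4*S 0 4*S 2 2 - 4*S 0 3*S 2 5 + 4*S 0 2*S 2 4 := by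
    rw [circ6_apply]
    simp only [rsumL_0]
    simp only [rsumR_4]
    simp only [sR_1_0, sR_2_0, sR_2_1, sR_3_0, sR_3_1, sR_3_2, sR_4_0, sR_4_1, sR_4_2, sR_4_3, sR_5_0, sR_5_1, sR_5_2, sR_5_3, sR_5_4, cC_1_1, cB_1_2, cC_1_3, cB_1_4, cC_1_5, cC_3_3, cB_3_4, cC_3_5, cC_5_5]
    ring
  have Q_0_5 : circ6 S S 0 5 = 4*S 0 5*S 2 2 + 4*S 0 4*S 2 3 - 4*S 0 3*S 2 4 - 4*S 0 2*S 2 5 := by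
    rw [circ6_apply]
    simp only [rsumL_0]
    simp only [rsumR_5]
    simp only [sR_1_0, sR_2_0, sR_2_1, sR_3_0, sR_3_1, sR_3_2, sR_4_0, sR_4_1, sR_4_2, sR_4_3, sR_5_0, sR_5_1, sR_5_2, sR_5_3, sR_5_4, cC_1_1, cB_1_2, cC_1_3, cB_1_4, cC_1_5, cC_3_3, cB_3_4, cC_3_5, cC_5_5]
    ring
  have Q_1_0 : circ6 S S 1 0 = 8*S 2 4*S 2 5 - 4*S 2 3*S 4 4 - 4*S 2 2*S 4 5 := by
    rw [circ6_apply]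
    simp only [rsumL_1]
    simp only [rsumR_0]
    simp only [sR_1_0, sR_2_0, sR_2_1, sR_3_0, sR_3_1, sR_3_2, sR_4_0, sR_4_1, sR_4_2, sR_4_3, sR_5_0, sR_5_1, sR_5_2, sR_5_3, sR_5_4, cC_1_1, cB_1_2, cC_1_3, cB_1_4, cC_1_5, cC_3_3, cB_3_4, cC_3_5, cC_5_5]
    ring
  have Q_1_1 : circ6 S S 1 1 = -4*S 2 5*S 2 5 + 4*S 2 4*S 2 4 + 4*S 2 3*S 4 5 - 4*S 2 2*S 4 4 := by
    rw [circ6_apply]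
    simp only [rsumL_1]
    simp only [rsumR_1]
    simp only [sR_1_0, sR_2_0, sR_2_1, sR_3_0, sR_3_1, sR_3_2, sR_4_0, sR_4_1, sR_4_2, sR_4_3, sR_5_0, sR_5_1, sR_5_2, sR_5_3, sR_5_4, cC_1_1, cB_1_2, cC_1_3, cB_1_4, cC_1_5, cC_3_3, cB_3_4, cC_3_5, cC_5_5]
    ring
  have Q_1_2 : circ6 S S 1 2 = -4*S 0 5*S 2 4 - 4*S 0 4*S 2 5 + 4*S 0 3*S 4 4 + 4*S 0 2*S 4 5 := by
    rw [circ6_apply]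
    simp only [rsumL_1]
    simp only [rsumR_2]
    simp only [sR_1_0, sR_2_0, sR_2_1, sR_3_0, sR_3_1, sR_3_2, sR_4_0, sR_4_1, sR_4_2, sR_4_3, sR_5_0, sR_5_1, sR_5_2, sR_5_3, sR_5_4, cC_1_1, cB_1_2, cC_1_3, cB_1_4, cC_1_5, cC_3_3, cB_3_4, cC_3_5, cC_5_5]
    ring
  have Q_1_3 : circ6 S S 1 3 = 4*S 0 5*S 2 5 - 4*S 0 4*S 2 4 - 4*S 0 3*S 4 5 + 4*S 0 2*S 4 4 := by
    rw [circ6_apply]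
    simp only [rsumL_1]
    simp only [rsumR_3]
    simp only [sR_1_0, sR_2_0, sR_2_1, sR_3_0, sR_3_1, sR_3_2, sR_4_0, sR_4_1, sR_4_2, sR_4_3, sR_5_0, sR_5_1, sR_5_2, sR_5_3, sR_5_4, cC_1_1, cB_1_2, cC_1_3, cB_1_4, cC_1_5, cC_3_3, cB_3_4, cC_3_5, cC_5_5]
    ring
  have Q_1_4 : circ6 S S 1 4 = 4*S 0 5*S 2 2 + 4*S 0 4*S 2 3 - 4*S 0 3*S 2 4 - 4*S 0 2*S 2 5 := by
    rw [circ6_apply]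
    simp only [rsumL_1]
    simp only [rsumR_4]
    simp only [sR_1_0, sR_2_0, sR_2_1, sR_3_0, sR_3_1, sR_3_2, sR_4_0, sR_4_1, sR_4_2, sR_4_3, sR_5_0, sR_5_1, sR_5_2, sR_5_3, sR_5_4, cC_1_1, cB_1_2, cC_1_3, cB_1_4, cC_1_5, cC_3_3, cB_3_4, cC_3_5, cC_5_5]
    ring
  have Q_1_5 : circ6 S S 1 5 = -4*S 0 5*S 2 3 + 4*S 0 4*S 2 2 + 4*S 0 3*S 2 5 - 4*S 0 2*S 2 4 := by
    rw [circ6_apply]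
    simp only [rsumL_1]
    simp only [rsumR_5]
    simp only [sR_1_0, sR_2_0, sR_2_1, sR_3_0, sR_3_1, sR_3_2, sR_4_0, sR_4_1, sR_4_2, sR_4_3, sR_5_0, sR_5_1, sR_5_2, sR_5_3, sR_5_4, cC_1_1, cB_1_2, cC_1_3, cB_1_4, cC_1_5, cC_3_3, cB_3_4, cC_3_5, cC_5_5]
    ring
  have Q_2_0 : circ6 S S 2 0 = -4*S 0 5*S 2 5 + 4*S 0 4*S 2 4 + 4*S 0 3*S 4 5 - 4*S 0 2*S 4 4 := by
    rw [circ6_apply]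
    simp only [rsumL_2]
    simp only [rsumR_0]
    simp only [sR_1_0, sR_2_0, sR_2_1, sR_3_0, sR_3_1, sR_3_2, sR_4_0, sR_4_1, sR_4_2, sR_4_3, sR_5_0, sR_5_1, sR_5_2, sR_5_3, sR_5_4, cC_1_1, cB_1_2, cC_1_3, cB_1_4, cC_1_5, cC_3_3, cB_3_4, cC_3_5, cC_5_5]
    ring
  have Q_2_1 : circ6 S S 2 1 = -4*S 0 5*S 2 4 - 4*S 0 4*S 2 5 + 4*S 0 3*S 4 4 + 4*S 0 2*S 4 5 := by
    rw [circ6_apply]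
    simp only [rsumL_2]
    simp only [rsumR_1]
    simp only [sR_1_0, sR_2_0, sR_2_1, sR_3_0, sR_3_1, sR_3_2, sR_4_0, sR_4_1, sR_4_2, sR_4_3, sR_5_0, sR_5_1, sR_5_2, sR_5_3, sR_5_4, cC_1_1, cB_1_2, cC_1_3, cB_1_4, cC_1_5, cC_3_3, cB_3_4, cC_3_5, cC_5_5]
    ring
  have Q_2_2 : circ6 S S 2 2 = 4*S 0 5*S 0 5 - 4*S 0 4*S 0 4 - 4*S 0 1*S 4 5 + 4*S 0 0*S 4 4 := by
    rw [circ6_apply]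
    simp only [rsumL_2]
    simp only [rsumR_2]
    simp only [sR_1_0, sR_2_0, sR_2_1, sR_3_0, sR_3_1, sR_3_2, sR_4_0, sR_4_1, sR_4_2, sR_4_3, sR_5_0, sR_5_1, sR_5_2, sR_5_3, sR_5_4, cC_1_1, cB_1_2, cC_1_3, cB_1_4, cC_1_5, cC_3_3, cB_3_4, cC_3_5, cC_5_5]
    ring
  have Q_2_3 : circ6 S S 2 3 = 8*S 0 4*S 0 5 - 4*S 0 1*S 4 4 - 4*S 0 0*S 4 5 := by
    rw [circ6_apply]
    simp only [rsumL_2]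
    simp only [rsumR_3]
    simp only [sR_1_0, sR_2_0, sR_2_1, sR_3_0, sR_3_1, sR_3_2, sR_4_0, sR_4_1, sR_4_2, sR_4_3, sR_5_0, sR_5_1, sR_5_2, sR_5_3, sR_5_4, cC_1_1, cB_1_2, cC_1_3, cB_1_4, cC_1_5, cC_3_3, cB_3_4, cC_3_5, cC_5_5]
    ring
  have Q_2_4 : circ6 S S 2 4 = -4*S 0 3*S 0 5 + 4*S 0 2*S 0 4 + 4*S 0 1*S 2 5 - 4*S 0 0*S 2 4 := by
    rw [circ6_apply]
    simp only [rsumL_2]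
    simp only [rsumR_4]
    simp only [sR_1_0, sR_2_0, sR_2_1, sR_3_0, sR_3_1, sR_3_2, sR_4_0, sR_4_1, sR_4_2, sR_4_3, sR_5_0, sR_5_1, sR_5_2, sR_5_3, sR_5_4, cC_1_1, cB_1_2, cC_1_3, cB_1_4, cC_1_5, cC_3_3, cB_3_4, cC_3_5, cC_5_5]
    ring
  have Q_2_5 : circ6 S S 2 5 = -4*S 0 3*S 0 4 - 4*S 0 2*S 0 5 + 4*S 0 1*S 2 4 + 4*S 0 0*S 2 5 := by
    rw [circ6_apply]
    simp only [rsumL_2]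
    simp only [rsumR_5]
    simp only [sR_1_0, sR_2_0, sR_2_1, sR_3_0, sR_3_1, sR_3_2, sR_4_0, sR_4_1, sR_4_2, sR_4_3, sR_5_0, sR_5_1, sR_5_2, sR_5_3, sR_5_4, cC_1_1, cB_1_2, cC_1_3, cB_1_4, cC_1_5, cC_3_3, cB_3_4, cC_3_5, cC_5_5]
    ring
  have Q_3_0 : circ6 S S 3 0 = -4*S 0 5*S 2 4 - 4*S 0 4*S 2 5 + 4*S 0 3*S 4 4 + 4*S 0 2*S 4 5 := by
    rw [circ6_apply]
    simp only [rsumL_3]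
    simp only [rsumR_0]
    simp only [sR_1_0, sR_2_0, sR_2_1, sR_3_0, sR_3_1, sR_3_2, sR_4_0, sR_4_1, sR_4_2, sR_4_3, sR_5_0, sR_5_1, sR_5_2, sR_5_3, sR_5_4, cC_1_1, cB_1_2, cC_1_3, cB_1_4, cC_1_5, cC_3_3, cB_3_4, cC_3_5, cC_5_5]
    ring
  have Q_3_1 : circ6 S S 3 1 = 4*S 0 5*S 2 5 - 4*S 0 4*S 2 4 - 4*S 0 3*S 4 5 + 4*S 0 2*S 4 4 := by
    rw [circ6_apply]
    simp only [rsumL_3]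
    simp only [rsumR_1]
    simp only [sR_1_0, sR_2_0, sR_2_1, sR_3_0, sR_3_1, sR_3_2, sR_4_0, sR_4_1, sR_4_2, sR_4_3, sR_5_0, sR_5_1, sR_5_2, sR_5_3, sR_5_4, cC_1_1, cB_1_2, cC_1_3, cB_1_4, cC_1_5, cC_3_3, cB_3_4, cC_3_5, cC_5_5]
    ring
  have Q_3_2 : circ6 S S 3 2 = 8*S 0 4*S 0 5 - 4*S 0 1*S 4 4 - 4*S 0 0*S 4 5 := by
    rw [circ6_apply]
    simp only [rsumL_3]
    simp only [rsumR_2]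
    simp only [sR_1_0, sR_2_0, sR_2_1, sR_3_0, sR_3_1, sR_3_2, sR_4_0, sR_4_1, sR_4_2, sR_4_3, sR_5_0, sR_5_1, sR_5_2, sR_5_3, sR_5_4, cC_1_1, cB_1_2, cC_1_3, cB_1_4, cC_1_5, cC_3_3, cB_3_4, cC_3_5, cC_5_5]
    ring
  have Q_3_3 : circ6 S S 3 3 = -4*S 0 5*S 0 5 + 4*S 0 4*S 0 4 + 4*S 0 1*S 4 5 - 4*S 0 0*S 4 4 := by
    rw [circ6_apply]
    simp only [rsumL_3]
    simp only [rsumR_3]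
    simp only [sR_1_0, sR_2_0, sR_2_1, sR_3_0, sR_3_1, sR_3_2, sR_4_0, sR_4_1, sR_4_2, sR_4_3, sR_5_0, sR_5_1, sR_5_2, sR_5_3, sR_5_4, cC_1_1, cB_1_2, cC_1_3, cB_1_4, cC_1_5, cC_3_3, cB_3_4, cC_3_5, cC_5_5]
    ring
  have Q_3_4 : circ6 S S 3 4 = -4*S 0 3*S 0 4 - 4*S 0 2*S 0 5 + 4*S 0 1*S 2 4 + 4*S 0 0*S 2 5 := by
    rw [circ6_apply]
    simp only [rsumL_3]
    simp only [rsumR_4]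
    simp only [sR_1_0, sR_2_0, sR_2_1, sR_3_0, sR_3_1, sR_3_2, sR_4_0, sR_4_1, sR_4_2, sR_4_3, sR_5_0, sR_5_1, sR_5_2, sR_5_3, sR_5_4, cC_1_1, cB_1_2, cC_1_3, cB_1_4, cC_1_5, cC_3_3, cB_3_4, cC_3_5, cC_5_5]
    ring
  have Q_3_5 : circ6 S S 3 5 = 4*S 0 3*S 0 5 - 4*S 0 2*S 0 4 - 4*S 0 1*S 2 5 + 4*S 0 0*S 2 4 := by
    rw [circ6_apply]
    simp only [rsumL_3]
    simp only [rsumR_5]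
    simp only [sR_1_0, sR_2_0, sR_2_1, sR_3_0, sR_3_1, sR_3_2, sR_4_0, sR_4_1, sR_4_2, sR_4_3, sR_5_0, sR_5_1, sR_5_2, sR_5_3, sR_5_4, cC_1_1, cB_1_2, cC_1_3, cB_1_4, cC_1_5, cC_3_3, cB_3_4, cC_3_5, cC_5_5]
    ring
  have Q_4_0 : circ6 S S 4 0 = 4*S 0 5*S 2 3 - 4*S 0 4*S 2 2 - 4*S 0 3*S 2 5 + 4*S 0 2*S 2 4 := by
    rw [circ6_apply]
    simp only [rsumL_4]
    simp only [rsumR_0]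
    simp only [sR_1_0, sR_2_0, sR_2_1, sR_3_0, sR_3_1, sR_3_2, sR_4_0, sR_4_1, sR_4_2, sR_4_3, sR_5_0, sR_5_1, sR_5_2, sR_5_3, sR_5_4, cC_1_1, cB_1_2, cC_1_3, cB_1_4, cC_1_5, cC_3_3, cB_3_4, cC_3_5, cC_5_5]
    ring
  have Q_4_1 : circ6 S S 4 1 = 4*S 0 5*S 2 2 + 4*S 0 4*S 2 3 - 4*S 0 3*S 2 4 - 4*S 0 2*S 2 5 := by
    rw [circ6_apply]
    simp only [rsumL_4]
    simp only [rsumR_1]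
    simp only [sR_1_0, sR_2_0, sR_2_1, sR_3_0, sR_3_1, sR_3_2, sR_4_0, sR_4_1, sR_4_2, sR_4_3, sR_5_0, sR_5_1, sR_5_2, sR_5_3, sR_5_4, cC_1_1, cB_1_2, cC_1_3, cB_1_4, cC_1_5, cC_3_3, cB_3_4, cC_3_5, cC_5_5]
    ring
  have Q_4_2 : circ6 S S 4 2 = -4*S 0 3*S 0 5 + 4*S 0 2*S 0 4 + 4*S 0 1*S 2 5 - 4*S 0 0*S 2 4 := by
    rw [circ6_apply]
    simp only [rsumL_4]
    simp only [rsumR_2]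
    simp only [sR_1_0, sR_2_0, sR_2_1, sR_3_0, sR_3_1, sR_3_2, sR_4_0, sR_4_1, sR_4_2, sR_4_3, sR_5_0, sR_5_1, sR_5_2, sR_5_3, sR_5_4, cC_1_1, cB_1_2, cC_1_3, cB_1_4, cC_1_5, cC_3_3, cB_3_4, cC_3_5, cC_5_5]
    ring
  have Q_4_3 : circ6 S S 4 3 = -4*S 0 3*S 0 4 - 4*S 0 2*S 0 5 + 4*S 0 1*S 2 4 + 4*S 0 0*S 2 5 := by
    rw [circ6_apply]
    simp only [rsumL_4]
    simp only [rsumR_3]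
    simp only [sR_1_0, sR_2_0, sR_2_1, sR_3_0, sR_3_1, sR_3_2, sR_4_0, sR_4_1, sR_4_2, sR_4_3, sR_5_0, sR_5_1, sR_5_2, sR_5_3, sR_5_4, cC_1_1, cB_1_2, cC_1_3, cB_1_4, cC_1_5, cC_3_3, cB_3_4, cC_3_5, cC_5_5]
    ring
  have Q_4_4 : circ6 S S 4 4 = 4*S 0 3*S 0 3 - 4*S 0 2*S 0 2 - 4*S 0 1*S 2 3 + 4*S 0 0*S 2 2 := by
    rw [circ6_apply]
    simp only [rsumL_4]
    simp only [rsumR_4]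
    simp only [sR_1_0, sR_2_0, sR_2_1, sR_3_0, sR_3_1, sR_3_2, sR_4_0, sR_4_1, sR_4_2, sR_4_3, sR_5_0, sR_5_1, sR_5_2, sR_5_3, sR_5_4, cC_1_1, cB_1_2, cC_1_3, cB_1_4, cC_1_5, cC_3_3, cB_3_4, cC_3_5, cC_5_5]
    ring
  have Q_4_5 : circ6 S S 4 5 = 8*S 0 2*S 0 3 - 4*S 0 1*S 2 2 - 4*S 0 0*S 2 3 := by
    rw [circ6_apply]
    simp only [rsumL_4]
    simp only [rsumR_5]
    simp only [sR_1_0, sR_2_0, sR_2_1, sR_3_0, sR_3_1, sR_3_2, sR_4_0, sR_4_1, sR_4_2, sR_4_3, sR_5_0, sR_5_1, sR_5_2, sR_5_3, sR_5_4, cC_1_1, cB_1_2, cC_1_3, cB_1_4, cC_1_5, cC_3_3, cB_3_4, cC_3_5, cC_5_5]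
    ring
  have Q_5_0 : circ6 S S 5 0 = 4*S 0 5*S 2 2 + 4*S 0 4*S 2 3 - 4*S 0 3*S 2 4 - 4*S 0 2*S 2 5 := by
    rw [circ6_apply]
    simp only [rsumL_5]
    simp only [rsumR_0]
    simp only [sR_1_0, sR_2_0, sR_2_1, sR_3_0, sR_3_1, sR_3_2, sR_4_0, sR_4_1, sR_4_2, sR_4_3, sR_5_0, sR_5_1, sR_5_2, sR_5_3, sR_5_4, cC_1_1, cB_1_2, cC_1_3, cB_1_4, cC_1_5, cC_3_3, cB_3_4, cC_3_5, cC_5_5]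
    ring
  have Q_5_1 : circ6 S S 5 1 = -4*S 0 5*S 2 3 + 4*S 0 4*S 2 2 + 4*S 0 3*S 2 5 - 4*S 0 2*S 2 4 := by
    rw [circ6_apply]
    simp only [rsumL_5]
    simp only [rsumR_1]
    simp only [sR_1_0, sR_2_0, sR_2_1, sR_3_0, sR_3_1, sR_3_2, sR_4_0, sR_4_1, sR_4_2, sR_4_3, sR_5_0, sR_5_1, sR_5_2, sR_5_3, sR_5_4, cC_1_1, cB_1_2, cC_1_3, cB_1_4, cC_1_5, cC_3_3, cB_3_4, cC_3_5, cC_5_5]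
    ring
  have Q_5_2 : circ6 S S 5 2 = -4*S 0 3*S 0 4 - 4*S 0 2*S 0 5 + 4*S 0 1*S 2 4 + 4*S 0 0*S 2 5 := by
    rw [circ6_apply]
    simp only [rsumL_5]
    simp only [rsumR_2]
    simp only [sR_1_0, sR_2_0, sR_2_1, sR_3_0, sR_3_1, sR_3_2, sR_4_0, sR_4_1, sR_4_2, sR_4_3, sR_5_0, sR_5_1, sR_5_2, sR_5_3, sR_5_4, cC_1_1, cB_1_2, cC_1_3, cB_1_4, cC_1_5, cC_3_3, cB_3_4, cC_3_5, cC_5_5]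
    ring
  have Q_5_3 : circ6 S S 5 3 = 4*S 0 3*S 0 5 - 4*S 0 2*S 0 4 - 4*S 0 1*S 2 5 + 4*S 0 0*S 2 4 := by
    rw [circ6_apply]
    simp only [rsumL_5]
    simp only [rsumR_3]
    simp only [sR_1_0, sR_2_0, sR_2_1, sR_3_0, sR_3_1, sR_3_2, sR_4_0, sR_4_1, sR_4_2, sR_4_3, sR_5_0, sR_5_1, sR_5_2, sR_5_3, sR_5_4, cC_1_1, cB_1_2, cC_1_3, cB_1_4, cC_1_5, cC_3_3, cB_3_4, cC_3_5, cC_5_5]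
    ring
  have Q_5_4 : circ6 S S 5 4 = 8*S 0 2*S 0 3 - 4*S 0 1*S 2 2 - 4*S 0 0*S 2 3 := by
    rw [circ6_apply]
    simp only [rsumL_5]
    simp only [rsumR_4]
    simp only [sR_1_0, sR_2_0, sR_2_1, sR_3_0, sR_3_1, sR_3_2, sR_4_0, sR_4_1, sR_4_2, sR_4_3, sR_5_0, sR_5_1, sR_5_2, sR_5_3, sR_5_4, cC_1_1, cB_1_2, cC_1_3, cB_1_4, cC_1_5, cC_3_3, cB_3_4, cC_3_5, cC_5_5]
    ring
  have Q_5_5 : circ6 S S 5 5 = -4*S 0 3*S 0 3 + 4*S 0 2*S 0 2 + 4*S 0 1*S 2 3 - 4*S 0 0*S 2 2 := by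
    rw [circ6_apply]
    simp only [rsumL_5]
    simp only [rsumR_5]
    simp only [sR_1_0, sR_2_0, sR_2_1, sR_3_0, sR_3_1, sR_3_2, sR_4_0, sR_4_1, sR_4_2, sR_4_3, sR_5_0, sR_5_1, sR_5_2, sR_5_3, sR_5_4, cC_1_1, cB_1_2, cC_1_3, cB_1_4, cC_1_5, cC_3_3, cB_3_4, cC_3_5, cC_5_5]
    ring
  have hT2 : mdot S S = 2*S 4 5*S 4 5 + 2*S 4 4*S 4 4 + 4*S 2 5*S 2 5 + 4*S 2 4*S 2 4 + 2*S 2 3*S 2 3 + 2*S 2 2*S 2 2 + 4*S 0 5*S 0 5 + 4*S 0 4*S 0 4 + 4*S 0 3*S 0 3 + 4*S 0 2*S 0 2 + 2*S 0 1*S 0 1 + 2*S 0 0*S 0 0 := by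
    rw [mdot_eq]
    simp only [Fin.sum_univ_six]
    simp only [sR_1_0, sR_2_0, sR_2_1, sR_3_0, sR_3_1, sR_3_2, sR_4_0, sR_4_1, sR_4_2, sR_4_3, sR_5_0, sR_5_1, sR_5_2, sR_5_3, sR_5_4, cC_1_1, cB_1_2, cC_1_3, cB_1_4, cC_1_5, cC_3_3, cB_3_4, cC_3_5, cC_5_5]
    ring
  have hS4 : mdot (S * S) (S * S) = 2*S 4 5*S 4 5*S 4 5*S 4 5 + 4*S 4 4*S 4 4*S 4 5*S 4 5 + 2*S 4 4*S 4 4*S 4 4*S 4 4 + 8*S 2 5*S 2 5*S 4 5*S 4 5 + 8*S 2 5*S 2 5*S 4 4*S 4 4 + 4*S 2 5*S 2 5*S 2 5*S 2 5 + 8*S 2 4*S 2 4*S 4 5*S 4 5 + 8*S 2 4*S 2 4*S 4 4*S 4 4 + 8*S 2 4*S 2 4*S 2 5*S 2 5 + 4*S 2 4*S 2 4*S 2 4*S 2 4 + 8*S 2 3*S 2 5*S 2 5*S 4 5 + 16*S 2 3*S 2 4*S 2 5*S 4 4 - 8*S 2 3*S 2 4*S 2 4*S 4 5 + 8*S 2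 3*S 2 3*S 2 5*S 2 5 + 8*S 2 3*S 2 3*S 2 4*S 2 4 + 2*S 2 3*S 2 3*S 2 3*S 2 3 - 8*S 2 2*S 2 5*S 2 5*S 4 4 + 16*S 2 2*S 2 4*S 2 5*S 4 5 + 8*S 2 2*S 2 4*S 2 4*S 4 4 + 8*S 2 2*S 2 2*S 2 5*S 2 5 + 8*S 2 2*S 2 2*S 2 4*S 2 4 + 4*S 2 2*S 2 2*S 2 3*S 2 3 + 2*S 2 2*S 2 2*S 2 2*S 2 2 + 8*S 0 5*S 0 5*S 4 5*S 4 5 + 8*S 0 5*S 0 5*S 4 4*S 4 4 + 8*S 0 5*S 0 5*S 2 5*S 2 5 + 8*S 0 5*S 0 5*S 2 4*S 2 4 + 4*S 0 5*S 0 5*S 0 5*S 0 5 + 8*S 0 4*S 0 4*S 4 5*S 4 5 + 8*S 0 4*S 0 4*S 4 4*S 4 4 + 8*S 0 4*S 0 4*S 2 5*S 2 5 + 8*S 0 4*S 0 4*S 2 4*S 2 4 + 8*S 0 4*S 0 4*S 0 5*S 0 5 + 4*S 0 4*S 0 4*S 0 4*S 0 4 + 16*S 0 3*S 0 5*S 2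 5*S 4 5 + 16*S 0 3*S 0 5*S 2 4*S 4 4 + 16*S 0 3*S 0 5*S 2 3*S 2 5 + 16*S 0 3*S 0 5*S 2 2*S 2 4 + 16*S 0 3*S 0 4*S 2 5*S 4 4 - 16*S 0 3*S 0 4*S 2 4*S 4 5 + 16*S 0 3*S 0 4*S 2 3*S 2 4 - 16*S 0 3*S 0 4*S 2 2*S 2 5 + 8*S 0 3*S 0 3*S 2 5*S 2 5 + 8*S 0 3*S 0 3*S 2 4*S 2 4 + 8*S 0 3*S 0 3*S 2 3*S 2 3 + 8*S 0 3*S 0 3*S 2 2*S 2 2 + 8*S 0 3*S 0 3*S 0 5*S 0 5 + 8*S 0 3*S 0 3*S 0 4*S 0 4 + 4*S 0 3*S 0 3*S 0 3*S 0 3 - 16*S 0 2*S 0 5*S 2 5*S 4 4 + 16*S 0 2*S 0 5*S 2 4*S 4 5 - 16*S 0 2*S 0 5*S 2 3*S 2 4 + 16*S 0 2*S 0 5*S 2 2*S 2 5 + 16*S 0 2*S 0 4*S 2 5*S 4 5 + 16*S 0 2*S 0 4*S 2 4*S 4 4 + 16*S 0 2*S 0 4*S 2 3*S 2 5 + 16*S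 0 2*S 0 4*S 2 2*S 2 4 + 8*S 0 2*S 0 2*S 2 5*S 2 5 + 8*S 0 2*S 0 2*S 2 4*S 2 4 + 8*S 0 2*S 0 2*S 2 3*S 2 3 + 8*S 0 2*S 0 2*S 2 2*S 2 2 + 8*S 0 2*S 0 2*S 0 5*S 0 5 + 8*S 0 2*S 0 2*S 0 4*S 0 4 + 8*S 0 2*S 0 2*S 0 3*S 0 3 + 4*S 0 2*S 0 2*S 0 2*S 0 2 + 8*S 0 1*S 0 5*S 0 5*S 4 5 + 16*S 0 1*S 0 4*S 0 5*S 4 4 - 8*S 0 1*S 0 4*S 0 4*S 4 5 + 16*S 0 1*S 0 3*S 0 5*S 2 5 + 16*S 0 1*S 0 3*S 0 4*S 2 4 + 8*S 0 1*S 0 3*S 0 3*S 2 3 + 16*S 0 1*S 0 2*S 0 5*S 2 4 - 16*S 0 1*S 0 2*S 0 4*S 2 5 + 16*S 0 1*S 0 2*S 0 3*S 2 2 - 8*S 0 1*S 0 2*S 0 2*S 2 3 + 8*S 0 1*S 0 1*S 0 5*S 0 5 + 8*S 0 1*S 0 1*S 0 4*S 0 4 + 8*S 0 1*S 0 1*S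 0 3*S 0 3 + 8*S 0 1*S 0 1*S 0 2*S 0 2 + 2*S 0 1*S 0 1*S 0 1*S 0 1 - 8*S 0 0*S 0 5*S 0 5*S 4 4 + 16*S 0 0*S 0 4*S 0 5*S 4 5 + 8*S 0 0*S 0 4*S 0 4*S 4 4 - 16*S 0 0*S 0 3*S 0 5*S 2 4 + 16*S 0 0*S 0 3*S 0 4*S 2 5 - 8*S 0 0*S 0 3*S 0 3*S 2 2 + 16*S 0 0*S 0 2*S 0 5*S 2 5 + 16*S 0 0*S 0 2*S 0 4*S 2 4 + 16*S 0 0*S 0 2*S 0 3*S 2 3 + 8*S 0 0*S 0 2*S 0 2*S 2 2 + 8*S 0 0*S 0 0*S 0 5*S 0 5 + 8*S 0 0*S 0 0*S 0 4*S 0 4 + 8*S 0 0*S 0 0*S 0 3*S 0 3 + 8*S 0 0*S 0 0*S 0 2*S 0 2 + 4*S 0 0*S 0 0*S 0 1*S 0 1 + 2*S 0 0*S 0 0*S 0 0*S 0 0 := by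
    rw [mdot_eq]
    simp only [Matrix.mul_apply, Fin.sum_univ_six]
    simp only [sR_1_0, sR_2_0, sR_2_1, sR_3_0, sR_3_1, sR_3_2, sR_4_0, sR_4_1, sR_4_2, sR_4_3, sR_5_0, sR_5_1, sR_5_2, sR_5_3, sR_5_4, cC_1_1, cB_1_2, cC_1_3, cB_1_4, cC_1_5, cC_3_3, cB_3_4, cC_3_5, cC_5_5]
    ring
  rw [mdot_eq]
  simp only [Fin.sum_univ_six]
  rw [hT2, hS4]
  simp only [Q_0_0, Q_0_1, Q_0_2, Q_0_3, Q_0_4, Q_0_5, Q_1_0, Q_1_1, Q_1_2, Q_1_3, Q_1_4, Q_1_5, Q_2_0, Q_2_1, Q_2_2, Q_2_3, Q_2_4, Q_2_5, Q_3_0, Q_3_1, Q_3_2, Q_3_3, Q_3_4, Q_3_5, Q_4_0, Q_4_1, Q_4_2, Q_4_3, Q_4_4, Q_4_5, Q_5_0, Q_5_1, Q_5_2, Q_5_3, Q_5_4, Q_5_5]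
  ring

lemma mdot_expand (X Y : M6) :
    mdot (X + Y) (X + Y) = mdot X X + 2 * mdot Y X + mdot Y Y := by
  have h1 : mdot (X + Y) (X + Y) = mdot X (X + Y) + mdot Y (X + Y) := mdot_add_left _ _ _
  have h2 : mdot X (X + Y) = mdot X X + mdot Y X := by
    rw [mdot_comm X (X + Y), mdot_add_left, mdot_comm X X]
  have h3 : mdot Y (X + Y) = mdot X Y + mdot Y Y := by
    rw [mdot_comm Y (X + Y), mdot_add_left, mdot_comm Y Y]
  have h4 : mdot X Y = mdot Y X := mdot_comm _ _
  linarith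

lemma master_decomp (A : M6) (h : inSp A) :
    mdot (Fflow A) A =
      -((1/4) * ((J6 * A).trace)^2 * mdot A A
        + (1/2) * mdot (symPart A) (symPart A)
            * mdot ((1/2 : ℝ) • (A - Aᵀ)) ((1/2 : ℝ) • (A - Aᵀ))
        + (1/2) * mdot (mcomm A Aᵀ + (1/2 : ℝ) • circ6 (symPart A) (symPart A))
            (mcomm A Aᵀ + (1/2 : ℝ) • circ6 (symPart A) (symPart A))
        + mdot (symPart A * symPart A) (symPart A * symPart A)) := by
  set S := symPart A with hS
  set K : M6 := (1/2 : ℝ) • (A - Aᵀ) with hK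
  set C : M6 := mcomm A Aᵀ with hC
  set Q : M6 := circ6 S S with hQdef
  have hsym : Sᵀ = S := symPart_transpose A
  have hconj : S = J6 * S * J6 := sp_symPart_conj A h
  have hQQ : mdot Q Q = 4 * (mdot S S)^2 - 8 * mdot (S * S) (S * S) :=
    circ_norm S hsym hconj
  have htr : (S * S).trace = mdot S S := by rw [mdot, hsym]
  have hAS : A = S + K := by
    ext i j
    simp [hS, hK, symPart, Matrix.add_apply, Matrix.smul_apply, Matrix.sub_apply,
      Matrix.transpose_apply]
    ring
  have hKT : Kᵀ = -K := by
    rw [hK]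
    ext i j
    simp [Matrix.transpose_apply, Matrix.smul_apply, Matrix.sub_apply, Matrix.neg_apply]
    ring
  have hSK : mdot S K = 0 := by
    have e1 : mdot S K = -((S * K).trace) := by
      rw [mdot, hKT]; simp [Matrix.mul_neg]
    have e2 : mdot S K = (S * K).trace := by
      rw [mdot_comm, mdot, hsym, Matrix.trace_mul_comm]
    linarith
  have hn : mdot A A = mdot S S + mdot K K := by
    rw [hAS, mdot_expand]
    have := hSK
    rw [mdot_comm S K] at this
    rw [this]; ring
  have hb1 : mdot (mcomm A C) A = -(mdot C C) := by
    rw [hC]; exact mdot_comm_bracket A _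
  have hb2 : mdot (mcomm A Q) A = -(mdot Q C) := by
    rw [hC]; exact mdot_comm_bracket A _
  have hFsplit : mdot (Fflow A) A =
      (-((1/2) * (S * S).trace + (1/4) * ((J6 * A).trace)^2)) * mdot A A
      + (1/2) * mdot (mcomm A C) A + (1/2) * mdot (mcomm A Q) A := by
    rw [Fflow]
    rw [mdot_add_left, mdot_add_left, mdot_smul_left, mdot_smul_left, mdot_smul_left]
  have hnsq : mdot (C + (1/2 : ℝ) • Q) (C + (1/2 : ℝ) • Q)
      = mdot C C + mdot Q C + (1/4) * mdot Q Q := by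
    rw [mdot_expand, mdot_smul_left]
    have : mdot ((1/2 : ℝ) • Q) ((1/2 : ℝ) • Q) = (1/4) * mdot Q Q := by
      rw [mdot_smul_left, mdot_comm, mdot_smul_left, mdot_comm]
      ring
    rw [this]; ring
  rw [hFsplit, hb1, hb2, htr, hnsq]
  linear_combination (-(1/2) * mdot S S) * hn + (1/8) * hQQ

lemma master_le (A : M6) (h : inSp A) : mdot (Fflow A) A ≤ 0 := by
  rw [master_decomp A h]
  have h1 : 0 ≤ (1/4) * ((J6 * A).trace)^2 * mdot A A := by
    apply mul_nonneg (mul_nonneg (by norm_num) (sq_nonneg _)) (mdot_nonneg _)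
  have h2 : 0 ≤ (1/2) * mdot (symPart A) (symPart A)
      * mdot ((1/2 : ℝ) • (A - Aᵀ)) ((1/2 : ℝ) • (A - Aᵀ)) :=
    mul_nonneg (mul_nonneg (by norm_num) (mdot_nonneg _)) (mdot_nonneg _)
  have h3 : 0 ≤ (1/2) * mdot (mcomm A Aᵀ + (1/2 : ℝ) • circ6 (symPart A) (symPart A))
      (mcomm A Aᵀ + (1/2 : ℝ) • circ6 (symPart A) (symPart A)) :=
    mul_nonneg (by norm_num) (mdot_nonneg _)
  have h4 : 0 ≤ mdot (symPart A * symPart A) (symPart A * symPart A) := mdot_nonneg _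
  linarith

lemma master_zero (A : M6) (h : inSp A) (h0 : mdot (Fflow A) A = 0) :
    Aᵀ = -A ∧ (J6 * A).trace = 0 := by
  have hd := master_decomp A h
  rw [h0] at hd
  have h1 : 0 ≤ (1/4) * ((J6 * A).trace)^2 * mdot A A :=
    mul_nonneg (mul_nonneg (by norm_num) (sq_nonneg _)) (mdot_nonneg _)
  have h2 : 0 ≤ (1/2) * mdot (symPart A) (symPart A)
      * mdot ((1/2 : ℝ) • (A - Aᵀ)) ((1/2 : ℝ) • (A - Aᵀ)) :=
    mul_nonneg (mul_nonneg (by norm_num) (mdot_nonneg _)) (mdot_nonneg _)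
  have h3 : 0 ≤ (1/2) * mdot (mcomm A Aᵀ + (1/2 : ℝ) • circ6 (symPart A) (symPart A))
      (mcomm A Aᵀ + (1/2 : ℝ) • circ6 (symPart A) (symPart A)) :=
    mul_nonneg (by norm_num) (mdot_nonneg _)
  have h4 : 0 ≤ mdot (symPart A * symPart A) (symPart A * symPart A) := mdot_nonneg _
  have e1 : (1/4) * ((J6 * A).trace)^2 * mdot A A = 0 := by linarith
  have e4 : mdot (symPart A * symPart A) (symPart A * symPart A) = 0 := by linarith
  -- S = 0
  have hSS : symPart A * symPart A = 0 := mdot_self_eq_zero e4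
  have hsym : (symPart A)ᵀ = symPart A := symPart_transpose A
  have hT2 : mdot (symPart A) (symPart A) = 0 := by
    rw [mdot, hsym, hSS, Matrix.trace_zero]
  have hS0 : symPart A = 0 := mdot_self_eq_zero hT2
  have hAT : Aᵀ = -A := by
    have : (1/2 : ℝ) • (A + Aᵀ) = 0 := hS0
    have h2' : A + Aᵀ = 0 := by
      have := congrArg (fun X => (2 : ℝ) • X) this
      simpa [smul_smul] using this
    have := eq_neg_of_add_eq_zero_right h2'
    exact this
  refine ⟨hAT, ?_⟩
  -- tau = 0
  have e1' : ((J6 * A).trace)^2 * mdot A A = 0 := by linarith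
  rcases mul_eq_zero.mp e1' with ht | hn
  · exact pow_eq_zero_iff (by norm_num) |>.mp ht
  · have hA0 : A = 0 := mdot_self_eq_zero hn
    rw [hA0, Matrix.mul_zero, Matrix.trace_zero]

lemma hasDerivAt_mdot (A : ℝ → M6) (t : ℝ)
    (hA : ∀ i j, HasDerivAt (fun s => A s i j) (Fflow (A t) i j) t) :
    HasDerivAt (fun s => mdot (A s) (A s)) (2 * mdot (Fflow (A t)) (A t)) t := by
  have hfun : (fun s => mdot (A s) (A s)) = fun s => ∑ i, ∑ j, A s i j * A s i j := by
    funext s; exact mdot_eq _ _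
  rw [hfun]
  have hval : HasDerivAt (fun s => ∑ i, ∑ j, A s i j * A s i j)
      (∑ i : Fin 6, ∑ j : Fin 6,
        (Fflow (A t) i j * A t i j + A t i j * Fflow (A t) i j)) t := by
    apply HasDerivAt.fun_sum
    intro i _
    apply HasDerivAt.fun_sum
    intro j _
    exact (hA i j).mul (hA i j)
  have e : (∑ i : Fin 6, ∑ j : Fin 6,
      (Fflow (A t) i j * A t i j + A t i j * Fflow (A t) i j))
      = 2 * mdot (Fflow (A t)) (A t) := by
    rw [mdot_eq, Finset.mul_sum]
    refine Finset.sum_congr rfl fun i _ => ?_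
    rw [Finset.mul_sum]
    refine Finset.sum_congr rfl fun j _ => ?_
    ring
  rw [e] at hval
  exact hval


/-- Along any solution of the bracket flow in `𝔰𝔭(ℝ⁶)`, the squared norm `|A(t)|²`
 is nonincreasing (so `|A(t)| ≤ |A(t₀)|` for `t₀ ≤ t`, and the solution stays bounded);
moreover if `d/dt |A(t)|² = 0` at some time `t`, then `A(t)ᵗ = −A(t)` and `tr(JA(t)) = 0`. -/
theorem norm_nonincreasing (I : Set ℝ) (hI : I.OrdConnected) (A : ℝ → M6)
    (hsp : ∀ t ∈ I, inSp (A t))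
    (hflow : ∀ t ∈ I, ∀ i j, HasDerivAt (fun s => A s i j) (Fflow (A t) i j) t) :
    AntitoneOn (fun t => mdot (A t) (A t)) I ∧
    (∀ t₀ ∈ I, ∀ t ∈ I, t₀ ≤ t →
      Real.sqrt (mdot (A t) (A t)) ≤ Real.sqrt (mdot (A t₀) (A t₀))) ∧
    (∀ t ∈ I, HasDerivAt (fun s => mdot (A s) (A s)) 0 t →
      (A t)ᵀ = -(A t) ∧ (J6 * A t).trace = 0) := by
  have hD : ∀ t ∈ I, HasDerivAt (fun s => mdot (A s) (A s))
      (2 * mdot (Fflow (A t)) (A t)) t := fun t ht =>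
    hasDerivAt_mdot A t (hflow t ht)
  have hanti : AntitoneOn (fun t => mdot (A t) (A t)) I := by
    apply antitoneOn_of_deriv_nonpos hI.convex
    · intro t ht
      exact ((hD t ht).continuousAt).continuousWithinAt
    · intro t ht
      exact ((hD t (interior_subset ht)).differentiableAt).differentiableWithinAt
    · intro t ht
      have h1 := (hD t (interior_subset ht)).deriv
      rw [h1]
      have := master_le (A t) (hsp t (interior_subset ht))
      linarith
  refine ⟨hanti, ?_, ?_⟩
  · intro t₀ h0 t ht hle
    exact Real.sqrt_le_sqrt (hanti h0 ht hle)
  · intro t ht hd0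
    have hu := (hD t ht).unique hd0
    have hz : mdot (Fflow (A t)) (A t) = 0 := by linarith
    exact master_zero (A t) (hsp t ht) hz
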